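/- Let G be a K_{s,t}-saturated n by n bipartite graph with minimum degree at least t-1 containing a core with e edges (a core is a set A ∪ A' with A ⊆ U, A' ⊆ U', |A| = |A'| = t-1, containing vertices a₀ ∈ A, a₀' ∈ A' whose neighborhoods are contained in A' and A respectively). Then e(G) ≥ (s+t-2)(n-t+1) - ⌊(s-1)²/4⌋ + e. -/

import Mathlib

open Finset

/-- An `n` by `n` bipartite graph, given by its edge set `E ⊆ U × U'`,
contains a copy of the complete bipartite graph with `a` vertices in `U`
and `b` vertices in `U'`. -/
def ContainsK (n : ℕ) (E : Finset (Fin n × Fin n)) (a b : ℕ) : Prop :=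
  ∃ S T : Finset (Fin n), S.card = a ∧ T.card = b ∧ ∀ u ∈ S, ∀ v ∈ T, (u, v) ∈ E

/-- Contains an (unordered) copy of `K_{s,t}`. -/
def ContainsKst (n : ℕ) (E : Finset (Fin n × Fin n)) (s t : ℕ) : Prop :=
  ContainsK n E s t ∨ ContainsK n E t s

/-- `K_{s,t}`-saturated: `K_{s,t}`-free, but adding any missing edge across
the bipartition creates a copy of `K_{s,t}`. -/
def SaturatedKst (n : ℕ) (E : Finset (Fin n × Fin n)) (s t : ℕ) : Prop :=
  ¬ ContainsKst n E s t ∧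
    ∀ u v : Fin n, (u, v) ∉ E → ContainsKst n (insert (u, v) E) s t

/-- Degree of a vertex `u` on the `U` side. -/
def degU (n : ℕ) (E : Finset (Fin n × Fin n)) (u : Fin n) : ℕ :=
  (E.filter (fun p => p.1 = u)).card

/-- Degree of a vertex `v` on the `U'` side. -/
def degV (n : ℕ) (E : Finset (Fin n × Fin n)) (v : Fin n) : ℕ :=
  (E.filter (fun p => p.2 = v)).card

/-! ### Auxiliary definitions and lemmas -/

def swapE (n : ℕ) (E : Finset (Fin n × Fin n)) : Finset (Fin n × Fin n) := E.image Prod.swap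
def nbr (n : ℕ) (E : Finset (Fin n × Fin n)) (u : Fin n) : Finset (Fin n) :=
  univ.filter (fun w => (u, w) ∈ E)
def nbrT (n : ℕ) (E : Finset (Fin n × Fin n)) (v : Fin n) : Finset (Fin n) :=
  univ.filter (fun w => (w, v) ∈ E)
def Dst (n : ℕ) (E : Finset (Fin n × Fin n)) (s : ℕ) (A A' : Finset (Fin n)) :
    Finset (Fin n) :=
  univ.filter (fun u => u ∉ A ∧ (nbr n E u ∩ A').card < s - 1)
def DstT (n : ℕ) (E : Finset (Fin n × Fin n)) (s : ℕ) (A A' : Finset (Fin n)) :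
    Finset (Fin n) :=
  univ.filter (fun v => v ∉ A' ∧ (nbrT n E v ∩ A).card < s - 1)
def Xst (n : ℕ) (E : Finset (Fin n × Fin n)) (s t : ℕ) (A A' : Finset (Fin n)) :
    Finset (Fin n) :=
  univ.filter (fun u => u ∉ A ∧ u ∉ Dst n E s A A' ∧
    (nbr n E u ∩ DstT n E s A A').card + (t - s) ≤ (nbr n E u \ A').card)
def XstT (n : ℕ) (E : Finset (Fin n × Fin n)) (s t : ℕ) (A A' : Finset (Fin n)) :
    Finset (Fin n) :=
  univ.filter (fun v => v ∉ A' ∧ v ∉ DstT n E s A A' ∧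
    (nbrT n E v ∩ Dst n E s A A').card + (t - s) ≤ (nbrT n E v \ A).card)
def C2t (n : ℕ) (E : Finset (Fin n × Fin n)) (s t : ℕ) (A A' : Finset (Fin n)) :
    Finset (Fin n) :=
  univ.filter (fun u => u ∈ Dst n E s A A' ∧
    (nbr n E u ∩ (A' ∪ DstT n E s A A' ∪ XstT n E s t A A')).card < s - 1)
def C2tT (n : ℕ) (E : Finset (Fin n × Fin n)) (s t : ℕ) (A A' : Finset (Fin n)) :
    Finset (Fin n) :=
  univ.filter (fun v => v ∈ DstT n E s A A' ∧
    (nbrT n E v ∩ (A ∪ Dst n E s A A' ∪ Xst n E s t A A')).card < s - 1)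



section Aux

variable {n : ℕ} {E : Finset (Fin n × Fin n)}

lemma mem_swapE {p : Fin n × Fin n} : p ∈ swapE n E ↔ (p.2, p.1) ∈ E := by
  constructor
  · rintro h
    obtain ⟨q, hq, rfl⟩ := Finset.mem_image.1 h
    simpa using hq
  · intro h
    exact Finset.mem_image.2 ⟨(p.2, p.1), h, rfl⟩


lemma card_swapE : (swapE n E).card = E.card :=
  Finset.card_image_of_injective _ Prod.swap_injective


lemma mem_nbr {u w : Fin n} : w ∈ nbr n E u ↔ (u, w) ∈ E := by
  simp [nbr]


lemma mem_nbrT {v w : Fin n} : w ∈ nbrT n E v ↔ (w, v) ∈ E := by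
  simp [nbrT]


lemma degU_eq (u : Fin n) : degU n E u = (nbr n E u).card := by
  rw [degU]
  apply Finset.card_bij (fun p _ => p.2)
  · rintro ⟨a, b⟩ hp
    simp only [mem_filter] at hp
    obtain ⟨h1, h2⟩ := hp
    subst h2
    exact mem_nbr.2 h1
  · rintro ⟨a, b⟩ ha ⟨c, d⟩ hc h
    simp only [mem_filter] at ha hc
    simp only []  at h
    ext <;> simp [ha.2, hc.2, h]
  · intro w hw
    exact ⟨(u, w), Finset.mem_filter.2 ⟨mem_nbr.1 hw, rfl⟩, rfl⟩


lemma sum_rows (Q : Fin n → Prop) [DecidablePred Q] (P : Fin n → Prop) [DecidablePred P] :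
    (E.filter (fun p => Q p.1 ∧ P p.2)).card
      = ∑ u ∈ univ.filter Q, ((nbr n E u).filter P).card := by
  rw [Finset.card_eq_sum_card_fiberwise (f := Prod.fst)
    (t := univ.filter Q) (fun p hp => by
      simp only [mem_coe, mem_filter] at hp ⊢
      exact ⟨mem_univ _, hp.2.1⟩)]
  refine Finset.sum_congr rfl (fun u hu => ?_)
  simp only [mem_filter, mem_univ, true_and] at hu
  apply Finset.card_bij (fun p _ => p.2)
  · rintro ⟨a, b⟩ hp
    simp only [mem_filter] at hp
    obtain ⟨⟨h1, h2, h3⟩, h4⟩ := hp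
    subst h4
    simp only [mem_filter]
    exact ⟨mem_nbr.2 h1, h3⟩
  · rintro ⟨a, b⟩ ha ⟨c, d⟩ hc h
    simp only [mem_filter] at ha hc
    simp only [] at h
    ext <;> simp [ha.2, hc.2, h]
  · intro w hw
    simp only [mem_filter] at hw
    refine ⟨(u, w), ?_, rfl⟩
    simp only [mem_filter]
    exact ⟨⟨mem_nbr.1 hw.1, hu, hw.2⟩, trivial⟩



lemma degV_eq (v : Fin n) : degV n E v = (nbrT n E v).card := by
  rw [degV]
  apply Finset.card_bij (fun p _ => p.1)
  · rintro ⟨a, b⟩ hp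
    simp only [mem_filter] at hp
    obtain ⟨h1, h2⟩ := hp
    subst h2
    exact mem_nbrT.2 h1
  · rintro ⟨a, b⟩ ha ⟨c, d⟩ hc h
    simp only [mem_filter] at ha hc
    simp only [] at h
    ext <;> simp [ha.2, hc.2, h]
  · intro w hw
    exact ⟨(w, v), Finset.mem_filter.2 ⟨mem_nbrT.1 hw, rfl⟩, rfl⟩


lemma sum_cols (Q : Fin n → Prop) [DecidablePred Q] (P : Fin n → Prop) [DecidablePred P] :
    (E.filter (fun p => Q p.2 ∧ P p.1)).card
      = ∑ v ∈ univ.filter Q, ((nbrT n E v).filter P).card := by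
  rw [Finset.card_eq_sum_card_fiberwise (f := Prod.snd)
    (t := univ.filter Q) (fun p hp => by
      simp only [mem_coe, mem_filter] at hp ⊢
      exact ⟨mem_univ _, hp.2.1⟩)]
  refine Finset.sum_congr rfl (fun v hv => ?_)
  simp only [mem_filter, mem_univ, true_and] at hv
  apply Finset.card_bij (fun p _ => p.1)
  · rintro ⟨a, b⟩ hp
    simp only [mem_filter] at hp
    obtain ⟨⟨h1, h2, h3⟩, h4⟩ := hp
    subst h4
    simp only [mem_filter]
    exact ⟨mem_nbrT.2 h1, h3⟩
  · rintro ⟨a, b⟩ ha ⟨c, d⟩ hc h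
    simp only [mem_filter] at ha hc
    simp only [] at h
    ext <;> simp [ha.2, hc.2, h]
  · intro w hw
    simp only [mem_filter] at hw
    refine ⟨(w, v), ?_, rfl⟩
    simp only [mem_filter]
    exact ⟨⟨mem_nbrT.1 hw.1, hv, hw.2⟩, trivial⟩


lemma containsK_swap {a b : ℕ} : ContainsK n (swapE n E) a b ↔ ContainsK n E b a := by
  constructor
  · rintro ⟨S, T, hS, hT, h⟩
    exact ⟨T, S, hT, hS, fun v hv u hu => mem_swapE.1 (h u hu v hv)⟩
  · rintro ⟨S, T, hS, hT, h⟩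
    exact ⟨T, S, hT, hS, fun v hv u hu => mem_swapE.2 (h u hu v hv)⟩

lemma containsKst_swap {s t : ℕ} : ContainsKst n (swapE n E) s t ↔ ContainsKst n E s t := by
  unfold ContainsKst
  rw [containsK_swap, containsK_swap, or_comm]

lemma insert_swapE (u v : Fin n) :
    insert (u, v) (swapE n E) = swapE n (insert (v, u) E) := by
  ext ⟨a, b⟩
  simp only [mem_insert, mem_swapE, Prod.mk.injEq]
  constructor
  · rintro (⟨rfl, rfl⟩ | h)
    · exact Or.inl ⟨rfl, rfl⟩
    · exact Or.inr h
  · rintro (⟨rfl, rfl⟩ | h)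
    · exact Or.inl ⟨rfl, rfl⟩
    · exact Or.inr h

lemma saturated_swap {s t : ℕ} (h : SaturatedKst n E s t) : SaturatedKst n (swapE n E) s t := by
  constructor
  · rw [containsKst_swap]
    exact h.1
  · intro u v huv
    rw [insert_swapE, containsKst_swap]
    exact h.2 v u (fun hc => huv (mem_swapE.2 hc))

lemma copy_through {s t : ℕ} (hfree : ¬ ContainsKst n E s t)
    (hsat : ∀ u v : Fin n, (u, v) ∉ E → ContainsKst n (insert (u, v) E) s t)
    {u v : Fin n} (huv : (u, v) ∉ E) :
    (∃ S T : Finset (Fin n), S.card = s ∧ T.card = t ∧ u ∈ S ∧ v ∈ T ∧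
        ∀ x ∈ S, ∀ y ∈ T, ¬(x = u ∧ y = v) → (x, y) ∈ E) ∨
    (∃ S T : Finset (Fin n), S.card = t ∧ T.card = s ∧ u ∈ S ∧ v ∈ T ∧
        ∀ x ∈ S, ∀ y ∈ T, ¬(x = u ∧ y = v) → (x, y) ∈ E) := by
  have key : ∀ a b : ℕ, ContainsK n (insert (u, v) E) a b →
      (∃ S T : Finset (Fin n), S.card = a ∧ T.card = b ∧ u ∈ S ∧ v ∈ T ∧
        ∀ x ∈ S, ∀ y ∈ T, ¬(x = u ∧ y = v) → (x, y) ∈ E) ∨ ContainsK n E a b := by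
    rintro a b ⟨S, T, hS, hT, h⟩
    by_cases hc : u ∈ S ∧ v ∈ T
    · left
      refine ⟨S, T, hS, hT, hc.1, hc.2, fun x hx y hy hne => ?_⟩
      rcases Finset.mem_insert.1 (h x hx y hy) with heq | hmem
      · exact absurd (Prod.mk.injEq .. ▸ heq) (by simpa [Prod.ext_iff] using hne)
      · exact hmem
    · right
      refine ⟨S, T, hS, hT, fun x hx y hy => ?_⟩
      rcases Finset.mem_insert.1 (h x hx y hy) with heq | hmem
      · exfalso
        have : x = u ∧ y = v := by simpa [Prod.ext_iff] using heq
        exact hc ⟨this.1 ▸ hx, this.2 ▸ hy⟩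
      · exact hmem
  rcases hsat u v huv with h | h
  · rcases key s t h with hgood | hbad
    · exact Or.inl hgood
    · exact absurd (Or.inl hbad) hfree
  · rcases key t s h with hgood | hbad
    · exact Or.inr hgood
    · exact absurd (Or.inr hbad) hfree



lemma nbr_swapE (u : Fin n) : nbr n (swapE n E) u = nbrT n E u := by
  ext w
  simp only [nbr, nbrT, mem_filter, mem_univ, true_and]
  exact mem_swapE

lemma nbrT_swapE (v : Fin n) : nbrT n (swapE n E) v = nbr n E v := by
  ext w
  simp only [nbr, nbrT, mem_filter, mem_univ, true_and]
  exact mem_swapE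

lemma Dst_swap {s : ℕ} {A A' : Finset (Fin n)} :
    Dst n (swapE n E) s A' A = DstT n E s A A' := by
  ext u
  simp only [Dst, DstT, mem_filter, mem_univ, true_and, nbr_swapE]

lemma DstT_swap {s : ℕ} {A A' : Finset (Fin n)} :
    DstT n (swapE n E) s A' A = Dst n E s A A' := by
  ext u
  simp only [Dst, DstT, mem_filter, mem_univ, true_and, nbrT_swapE]

lemma Xst_swap {s t : ℕ} {A A' : Finset (Fin n)} :
    Xst n (swapE n E) s t A' A = XstT n E s t A A' := by
  ext u
  simp only [Xst, XstT, mem_filter, mem_univ, true_and, nbr_swapE, Dst_swap, DstT_swap]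

lemma XstT_swap {s t : ℕ} {A A' : Finset (Fin n)} :
    XstT n (swapE n E) s t A' A = Xst n E s t A A' := by
  ext u
  simp only [Xst, XstT, mem_filter, mem_univ, true_and, nbrT_swapE, Dst_swap, DstT_swap]

lemma C2t_swap {s t : ℕ} {A A' : Finset (Fin n)} :
    C2t n (swapE n E) s t A' A = C2tT n E s t A A' := by
  ext u
  simp only [C2t, C2tT, mem_filter, mem_univ, true_and, nbr_swapE, Dst_swap, DstT_swap,
    Xst_swap, XstT_swap]

lemma C2tT_swap {s t : ℕ} {A A' : Finset (Fin n)} :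
    C2tT n (swapE n E) s t A' A = C2t n E s t A A' := by
  ext u
  simp only [C2t, C2tT, mem_filter, mem_univ, true_and, nbrT_swapE, Dst_swap, DstT_swap,
    Xst_swap, XstT_swap]

lemma filter_swapE {A A' : Finset (Fin n)} :
    ((swapE n E).filter (fun p => p.1 ∈ A' ∧ p.2 ∈ A)).card
      = (E.filter (fun p => p.1 ∈ A ∧ p.2 ∈ A')).card := by
  have h : (swapE n E).filter (fun p => p.1 ∈ A' ∧ p.2 ∈ A)
      = swapE n (E.filter (fun p => p.1 ∈ A ∧ p.2 ∈ A')) := by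
    ext ⟨a, b⟩
    constructor
    · intro h
      obtain ⟨h1, h2, h3⟩ := Finset.mem_filter.1 h
      have := mem_swapE.1 h1
      refine Finset.mem_image.2 ⟨(b, a), Finset.mem_filter.2 ⟨this, h3, h2⟩, rfl⟩
    · intro h
      obtain ⟨⟨c, d⟩, hq, heq⟩ := Finset.mem_image.1 h
      obtain ⟨h1, h2, h3⟩ := Finset.mem_filter.1 hq
      cases heq
      exact Finset.mem_filter.2 ⟨Finset.mem_image.2 ⟨(c, d), h1, rfl⟩, h3, h2⟩
  rw [h]
  exact card_swapE




lemma univ_filter_mem (S : Finset (Fin n)) : univ.filter (fun x => x ∈ S) = S := by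
  ext x; simp

lemma filter_mem_inter (W S : Finset (Fin n)) : W.filter (fun x => x ∈ S) = W ∩ S := by
  ext x; simp [Finset.mem_inter]


lemma lemLB {s t : ℕ} {A A' : Finset (Fin n)} {a₀ a₀' : Fin n} (hs : 1 ≤ s) (hst : s < t)
    (hsat : SaturatedKst n E s t)
    (hA : A.card = t - 1) (ha₀ : a₀ ∈ A) (ha₀' : a₀' ∈ A')
    (hNa₀ : ∀ v : Fin n, (a₀, v) ∈ E → v ∈ A')
    (hNa₀' : ∀ u : Fin n, (u, a₀') ∈ E → u ∈ A)
    {u : Fin n} (hu : u ∉ A) (hudef : (nbr n E u ∩ A').card < s - 1) :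
    t - 1 ≤ (nbr n E u \ DstT n E s A A').card := by
  have huv : (u, a₀') ∉ E := fun h => hu (hNa₀' u h)
  rcases copy_through hsat.1 hsat.2 huv with ⟨S, T, hS, hT, huS, hvT, hadj⟩ |
    ⟨S, T, hS, hT, huS, hvT, hadj⟩
  · -- S.card = s, T.card = t : extract T.erase a₀' ⊆ nbr u \ DstT
    have hsub : T.erase a₀' ⊆ nbr n E u \ DstT n E s A A' := by
      intro w hw
      obtain ⟨hwne, hwT⟩ := Finset.mem_erase.1 hw
      have hw1 : (u, w) ∈ E := hadj u huS w hwT (fun h => hwne h.2)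
      rw [Finset.mem_sdiff]
      refine ⟨mem_nbr.2 hw1, fun hwD => ?_⟩
      simp only [DstT, mem_filter, mem_univ, true_and] at hwD
      obtain ⟨hwA', hwcard⟩ := hwD
      have hsub2 : S.erase u ⊆ nbrT n E w ∩ A := by
        intro x hx
        obtain ⟨hxne, hxS⟩ := Finset.mem_erase.1 hx
        have hx1 : (x, a₀') ∈ E := hadj x hxS a₀' hvT (fun h => hxne h.1)
        have hx2 : (x, w) ∈ E := hadj x hxS w hwT (fun h => hxne h.1)
        exact Finset.mem_inter.2 ⟨mem_nbrT.2 hx2, hNa₀' x hx1⟩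
      have hcard2 : s - 1 ≤ (nbrT n E w ∩ A).card := by
        calc s - 1 = (S.erase u).card := by rw [Finset.card_erase_of_mem huS, hS]
        _ ≤ _ := Finset.card_le_card hsub2
      omega
    calc t - 1 = (T.erase a₀').card := by rw [Finset.card_erase_of_mem hvT, hT]
    _ ≤ _ := Finset.card_le_card hsub
  · -- S.card = t, T.card = s : contradiction with deficiency of u
    exfalso
    have hsub : S.erase u ⊆ A := by
      intro x hx
      obtain ⟨hxne, hxS⟩ := Finset.mem_erase.1 hx
      exact hNa₀' x (hadj x hxS a₀' hvT (fun h => hxne h.1))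
    have hSA : S.erase u = A := by
      apply Finset.eq_of_subset_of_card_le hsub
      rw [Finset.card_erase_of_mem huS, hS, hA]
    have ha₀S : a₀ ∈ S := Finset.mem_of_mem_erase (hSA ▸ ha₀)
    have ha₀ne : a₀ ≠ u := fun h => hu (h ▸ ha₀)
    have hsub2 : T.erase a₀' ⊆ nbr n E u ∩ A' := by
      intro w hw
      obtain ⟨hwne, hwT⟩ := Finset.mem_erase.1 hw
      have hw1 : (u, w) ∈ E := hadj u huS w hwT (fun h => hwne h.2)
      have hw2 : (a₀, w) ∈ E := hadj a₀ ha₀S w hwT (fun h => ha₀ne h.1)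
      exact Finset.mem_inter.2 ⟨mem_nbr.2 hw1, hNa₀ w hw2⟩
    have : s - 1 ≤ (nbr n E u ∩ A').card := by
      calc s - 1 = (T.erase a₀').card := by rw [Finset.card_erase_of_mem hvT, hT]
      _ ≤ _ := Finset.card_le_card hsub2
    omega



lemma lemComp {s t : ℕ} {A A' : Finset (Fin n)} (hst : s < t)
    (hsat : SaturatedKst n E s t)
    {u v : Fin n} (hu : u ∈ C2t n E s t A A') (hv : v ∈ C2tT n E s t A A') :
    (u, v) ∈ E := by
  simp only [C2t, mem_filter, mem_univ, true_and] at hu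
  simp only [C2tT, mem_filter, mem_univ, true_and] at hv
  obtain ⟨huD, hu2⟩ := hu
  obtain ⟨hvD, hv2⟩ := hv
  simp only [Dst, mem_filter, mem_univ, true_and] at huD
  simp only [DstT, mem_filter, mem_univ, true_and] at hvD
  by_contra huv
  rcases copy_through hsat.1 hsat.2 huv with ⟨S, T, hS, hT, huS, hvT, hadj⟩ |
    ⟨S, T, hS, hT, huS, hvT, hadj⟩
  · -- |S| = s, |T| = t
    -- find x ∈ S.erase u outside A ∪ Dst ∪ Xst
    have hrows : S.erase u ⊆ nbrT n E v := by
      intro x hx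
      obtain ⟨hxne, hxS⟩ := Finset.mem_erase.1 hx
      exact mem_nbrT.2 (hadj x hxS v hvT (fun h => hxne h.1))
    have hnotsub : ¬ (S.erase u ⊆ A ∪ Dst n E s A A' ∪ Xst n E s t A A') := by
      intro hcon
      have : S.erase u ⊆ nbrT n E v ∩ (A ∪ Dst n E s A A' ∪ Xst n E s t A A') :=
        fun x hx => Finset.mem_inter.2 ⟨hrows hx, hcon hx⟩
      have hle := Finset.card_le_card this
      rw [Finset.card_erase_of_mem huS, hS] at hle
      omega
    obtain ⟨x, hxSe, hxnot⟩ := Finset.not_subset.1 hnotsub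
    obtain ⟨hxne, hxS⟩ := Finset.mem_erase.1 hxSe
    simp only [Finset.mem_union, not_or] at hxnot
    obtain ⟨⟨hxA, hxD⟩, hxX⟩ := hxnot
    simp only [Xst, mem_filter, mem_univ, true_and, not_and, not_le] at hxX
    have hxineq := hxX hxA hxD
    -- W := (T.erase v) \ (A' ∪ DstT)
    set W := (T.erase v) \ (A' ∪ DstT n E s A A') with hW
    have hWcard : (T.erase v).card = W.card + ((T.erase v) ∩ (A' ∪ DstT n E s A A')).card := by
      rw [hW]
      exact (Finset.card_sdiff_add_card_inter _ _).symm
    have hIsub : (T.erase v) ∩ (A' ∪ DstT n E s A A')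
        ⊆ nbr n E u ∩ (A' ∪ DstT n E s A A' ∪ XstT n E s t A A') := by
      intro w hw
      obtain ⟨hw1, hw2⟩ := Finset.mem_inter.1 hw
      obtain ⟨hwne, hwT⟩ := Finset.mem_erase.1 hw1
      refine Finset.mem_inter.2 ⟨mem_nbr.2 (hadj u huS w hwT (fun h => hwne h.2)), ?_⟩
      rcases Finset.mem_union.1 hw2 with h | h
      · exact Finset.mem_union.2 (Or.inl (Finset.mem_union.2 (Or.inl h)))
      · exact Finset.mem_union.2 (Or.inl (Finset.mem_union.2 (Or.inr h)))
    have hIcard := Finset.card_le_card hIsub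
    have hTec : (T.erase v).card = t - 1 := by rw [Finset.card_erase_of_mem hvT, hT]
    -- W ⊆ nbr x \ A', disjoint from nbr x ∩ DstT
    have hWsub : W ⊆ nbr n E x \ A' := by
      intro w hw
      rw [hW, Finset.mem_sdiff] at hw
      obtain ⟨hw1, hw2⟩ := hw
      obtain ⟨hwne, hwT⟩ := Finset.mem_erase.1 hw1
      simp only [Finset.mem_union, not_or] at hw2
      exact Finset.mem_sdiff.2 ⟨mem_nbr.2 (hadj x hxS w hwT (fun h => hxne h.1)), hw2.1⟩
    have hDsub : nbr n E x ∩ DstT n E s A A' ⊆ nbr n E x \ A' := by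
      intro w hw
      obtain ⟨hw1, hw2⟩ := Finset.mem_inter.1 hw
      simp only [DstT, mem_filter, mem_univ, true_and] at hw2
      exact Finset.mem_sdiff.2 ⟨hw1, hw2.1⟩
    have hdisj : Disjoint W (nbr n E x ∩ DstT n E s A A') := by
      rw [Finset.disjoint_left]
      intro w hw hw2
      rw [hW, Finset.mem_sdiff] at hw
      exact hw.2 (Finset.mem_union.2 (Or.inr (Finset.mem_inter.1 hw2).2))
    have hfinal : W.card + (nbr n E x ∩ DstT n E s A A').card ≤ (nbr n E x \ A').card := by
      rw [← Finset.card_union_of_disjoint hdisj]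
      exact Finset.card_le_card (Finset.union_subset hWsub hDsub)
    omega
  · -- |S| = t, |T| = s
    have hcols : T.erase v ⊆ nbr n E u := by
      intro w hw
      obtain ⟨hwne, hwT⟩ := Finset.mem_erase.1 hw
      exact mem_nbr.2 (hadj u huS w hwT (fun h => hwne h.2))
    have hnotsub : ¬ (T.erase v ⊆ A' ∪ DstT n E s A A' ∪ XstT n E s t A A') := by
      intro hcon
      have : T.erase v ⊆ nbr n E u ∩ (A' ∪ DstT n E s A A' ∪ XstT n E s t A A') :=
        fun w hw => Finset.mem_inter.2 ⟨hcols hw, hcon hw⟩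
      have hle := Finset.card_le_card this
      rw [Finset.card_erase_of_mem hvT, hT] at hle
      omega
    obtain ⟨w, hwTe, hwnot⟩ := Finset.not_subset.1 hnotsub
    obtain ⟨hwne, hwT⟩ := Finset.mem_erase.1 hwTe
    simp only [Finset.mem_union, not_or] at hwnot
    obtain ⟨⟨hwA', hwD⟩, hwX⟩ := hwnot
    simp only [XstT, mem_filter, mem_univ, true_and, not_and, not_le] at hwX
    have hwineq := hwX hwA' hwD
    set V := (S.erase u) \ (A ∪ Dst n E s A A') with hV
    have hVcard : (S.erase u).card = V.card + ((S.erase u) ∩ (A ∪ Dst n E s A A')).card := by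
      rw [hV]
      exact (Finset.card_sdiff_add_card_inter _ _).symm
    have hIsub : (S.erase u) ∩ (A ∪ Dst n E s A A')
        ⊆ nbrT n E v ∩ (A ∪ Dst n E s A A' ∪ Xst n E s t A A') := by
      intro x hx
      obtain ⟨hx1, hx2⟩ := Finset.mem_inter.1 hx
      obtain ⟨hxne, hxS⟩ := Finset.mem_erase.1 hx1
      refine Finset.mem_inter.2 ⟨mem_nbrT.2 (hadj x hxS v hvT (fun h => hxne h.1)), ?_⟩
      rcases Finset.mem_union.1 hx2 with h | h
      · exact Finset.mem_union.2 (Or.inl (Finset.mem_union.2 (Or.inl h)))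
      · exact Finset.mem_union.2 (Or.inl (Finset.mem_union.2 (Or.inr h)))
    have hIcard := Finset.card_le_card hIsub
    have hSec : (S.erase u).card = t - 1 := by rw [Finset.card_erase_of_mem huS, hS]
    have hVsub : V ⊆ nbrT n E w \ A := by
      intro x hx
      rw [hV, Finset.mem_sdiff] at hx
      obtain ⟨hx1, hx2⟩ := hx
      obtain ⟨hxne, hxS⟩ := Finset.mem_erase.1 hx1
      simp only [Finset.mem_union, not_or] at hx2
      exact Finset.mem_sdiff.2 ⟨mem_nbrT.2 (hadj x hxS w hwT (fun h => hxne h.1)), hx2.1⟩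
    have hDsub : nbrT n E w ∩ Dst n E s A A' ⊆ nbrT n E w \ A := by
      intro x hx
      obtain ⟨hx1, hx2⟩ := Finset.mem_inter.1 hx
      simp only [Dst, mem_filter, mem_univ, true_and] at hx2
      exact Finset.mem_sdiff.2 ⟨hx1, hx2.1⟩
    have hdisj : Disjoint V (nbrT n E w ∩ Dst n E s A A') := by
      rw [Finset.disjoint_left]
      intro x hx hx2
      rw [hV, Finset.mem_sdiff] at hx
      exact hx.2 (Finset.mem_union.2 (Or.inr (Finset.mem_inter.1 hx2).2))
    have hfinal : V.card + (nbrT n E w ∩ Dst n E s A A').card ≤ (nbrT n E w \ A).card := by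
      rw [← Finset.card_union_of_disjoint hdisj]
      exact Finset.card_le_card (Finset.union_subset hVsub hDsub)
    omega


end Aux


lemma amgm (k y : ℕ) : y * (k - y) ≤ k ^ 2 / 4 := by
  rcases le_or_gt y k with h | h
  · rw [Nat.le_div_iff_mul_le (by norm_num : 0 < 4)]
    zify [h]
    nlinarith [sq_nonneg ((k : ℤ) - 2 * y)]
  · simp [Nat.sub_eq_zero_of_le h.le]

lemma payoff {k y y' F : ℕ} (h : y' ≤ y) (hF : y * (k - y) ≤ F) :
    y' * k ≤ y' * y + F := by
  rcases le_or_gt k y with h2 | h2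
  · exact le_add_right (Nat.mul_le_mul_left _ h2)
  · have h1 : y' * k = y' * y + y' * (k - y) := by
      rw [← Nat.mul_add]
      congr 1
      omega
    have h3 : y' * (k - y) ≤ y * (k - y) := Nat.mul_le_mul_right _ h
    omega



lemma mainLedger (s t n : ℕ) (hs : 1 ≤ s) (hst : s < t) (hn : t ≤ n)
    (E : Finset (Fin n × Fin n)) (hsat : SaturatedKst n E s t)
    (hminU : ∀ u : Fin n, t - 1 ≤ degU n E u)
    (hminV : ∀ v : Fin n, t - 1 ≤ degV n E v)
    (A A' : Finset (Fin n)) (a₀ a₀' : Fin n)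
    (hA : A.card = t - 1) (hA' : A'.card = t - 1)
    (ha₀ : a₀ ∈ A) (ha₀' : a₀' ∈ A')
    (hNa₀ : ∀ v : Fin n, (a₀, v) ∈ E → v ∈ A')
    (hNa₀' : ∀ u : Fin n, (u, a₀') ∈ E → u ∈ A)
    (e : ℕ) (he : e = (E.filter (fun p => p.1 ∈ A ∧ p.2 ∈ A')).card)
    (hy : (C2tT n E s t A A').card ≤ (C2t n E s t A A').card) :
    (s + t - 2) * (n - t + 1) + e ≤ E.card + (s - 1) ^ 2 / 4 := by
  classical
  set D := Dst n E s A A' with hD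
  set D' := DstT n E s A A' with hD'
  set Xs := Xst n E s t A A' with hXs
  set C2 := C2t n E s t A A' with hC2
  set C2' := C2tT n E s t A A' with hC2'
  set Xf : Finset (Fin n) := univ.filter (fun u => u ∉ A) with hXf
  set Yf : Finset (Fin n) := univ.filter (fun v => v ∉ A') with hYf
  set DX := D ∪ Xs with hDX
  -- cardinalities
  have hYfcard : Yf.card = n - t + 1 := by
    have h1 : Yf = univ \ A' := by ext x; simp [hYf]
    rw [h1, Finset.card_sdiff_of_subset (Finset.subset_univ _), Finset.card_univ, Fintype.card_fin, hA']
    omega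
  have hXfcard : Xf.card = n - t + 1 := by
    have h1 : Xf = univ \ A := by ext x; simp [hXf]
    rw [h1, Finset.card_sdiff_of_subset (Finset.subset_univ _), Finset.card_univ, Fintype.card_fin, hA]
    omega
  -- the identity
  have hid : E.card = e + (∑ u ∈ Xf, (nbr n E u).card) + (∑ v ∈ Yf, (nbrT n E v ∩ A).card) := by
    have h1 : E.card = (E.filter (fun p => p.1 ∈ A)).card
        + (E.filter (fun p => ¬ p.1 ∈ A)).card :=
      (Finset.card_filter_add_card_filter_not _).symm
    have h2 : (E.filter (fun p => p.1 ∈ A)).card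
        = (E.filter (fun p => p.1 ∈ A ∧ p.2 ∈ A')).card
          + (E.filter (fun p => p.1 ∈ A ∧ ¬ p.2 ∈ A')).card := by
      have := Finset.card_filter_add_card_filter_not
        (s := E.filter (fun p => p.1 ∈ A)) (p := fun p => p.2 ∈ A')
      rw [Finset.filter_filter, Finset.filter_filter] at this
      exact this.symm
    have h3 : (E.filter (fun p => p.1 ∈ A ∧ ¬ p.2 ∈ A')).card
        = ∑ v ∈ Yf, (nbrT n E v ∩ A).card := by
      have heq : E.filter (fun p => p.1 ∈ A ∧ ¬ p.2 ∈ A')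
          = E.filter (fun p => (¬ p.2 ∈ A') ∧ p.1 ∈ A) :=
        Finset.filter_congr (fun p _ => by tauto)
      rw [heq, sum_cols (fun v => ¬ v ∈ A') (fun x => x ∈ A)]
      exact Finset.sum_congr rfl (fun v _ => by rw [filter_mem_inter])
    have h4 : (E.filter (fun p => ¬ p.1 ∈ A)).card = ∑ u ∈ Xf, (nbr n E u).card := by
      have heq : E.filter (fun p => ¬ p.1 ∈ A)
          = E.filter (fun p => (¬ p.1 ∈ A) ∧ (fun _ : Fin n => True) p.2) :=
        Finset.filter_congr (fun p _ => by simp)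
      rw [heq, sum_rows (fun u => ¬ u ∈ A) (fun _ => True)]
      exact Finset.sum_congr rfl (fun u _ => by rw [Finset.filter_true])
    rw [h1, h2, h3, h4, ← he]
    ring
  -- row-side bound
  have hDXsub : DX ⊆ Xf := by
    intro u hu
    rcases Finset.mem_union.1 hu with h | h
    · simp only [hD, Dst, mem_filter, mem_univ, true_and] at h
      simp [hXf, h.1]
    · simp only [hXs, Xst, mem_filter, mem_univ, true_and] at h
      simp [hXf, h.1]
  have hrowbound : (t - 1) * Xf.card + ∑ u ∈ DX, (nbr n E u ∩ D').card
      ≤ ∑ u ∈ Xf, (nbr n E u).card := by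
    have hsplit : ∑ u ∈ Xf, (nbr n E u).card
        = ∑ u ∈ Xf \ DX, (nbr n E u).card + ∑ u ∈ DX, (nbr n E u).card :=
      (Finset.sum_sdiff hDXsub).symm
    have hb1 : (t - 1) * (Xf \ DX).card ≤ ∑ u ∈ Xf \ DX, (nbr n E u).card := by
      rw [mul_comm, ← smul_eq_mul]
      exact Finset.card_nsmul_le_sum _ _ _ (fun u _ => by rw [← degU_eq]; exact hminU u)
    have hb2 : ∑ u ∈ DX, ((t - 1) + (nbr n E u ∩ D').card) ≤ ∑ u ∈ DX, (nbr n E u).card := by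
      apply Finset.sum_le_sum
      intro u hu
      rcases Finset.mem_union.1 hu with h | h
      · -- u ∈ D : use lemLB
        have hmem := h
        simp only [hD, Dst, mem_filter, mem_univ, true_and] at hmem
        have hLB := lemLB hs hst hsat hA ha₀ ha₀' hNa₀ hNa₀' hmem.1 hmem.2
        rw [← hD'] at hLB
        have hcut : (nbr n E u \ D').card + (nbr n E u ∩ D').card = (nbr n E u).card :=
          Finset.card_sdiff_add_card_inter _ _
        omega
      · -- u ∈ Xs
        have hmem := h
        simp only [hXs, Xst, mem_filter, mem_univ, true_and] at hmem
        obtain ⟨huA, huD, huineq⟩ := hmem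
        rw [← hD'] at huineq
        have hnd : ¬ ((nbr n E u ∩ A').card < s - 1) := by
          intro hc
          exact huD (by simp only [hD, Dst, mem_filter, mem_univ, true_and]; exact ⟨huA, hc⟩)
        have hcut : (nbr n E u ∩ A').card + (nbr n E u \ A').card = (nbr n E u).card :=
          Finset.card_inter_add_card_sdiff _ _
        omega
    have hb2' : ∑ u ∈ DX, ((t - 1) + (nbr n E u ∩ D').card)
        = (t - 1) * DX.card + ∑ u ∈ DX, (nbr n E u ∩ D').card := by
      rw [Finset.sum_add_distrib, Finset.sum_const, smul_eq_mul, mul_comm]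
    have hcards : (Xf \ DX).card + DX.card = Xf.card :=
      Finset.card_sdiff_add_card_eq_card hDXsub
    calc (t - 1) * Xf.card + ∑ u ∈ DX, (nbr n E u ∩ D').card
        = (t - 1) * (Xf \ DX).card + ((t - 1) * DX.card + ∑ u ∈ DX, (nbr n E u ∩ D').card) := by
          rw [← hcards]; ring
      _ ≤ ∑ u ∈ Xf \ DX, (nbr n E u).card + ∑ u ∈ DX, (nbr n E u).card := by
          rw [← hb2']
          exact Nat.add_le_add hb1 hb2
      _ = ∑ u ∈ Xf, (nbr n E u).card := hsplit.symm
  -- double counting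
  have hdouble : ∑ u ∈ DX, (nbr n E u ∩ D').card = ∑ v ∈ D', (nbrT n E v ∩ DX).card := by
    have h1 : (E.filter (fun p => p.1 ∈ DX ∧ p.2 ∈ D')).card
        = ∑ u ∈ DX, (nbr n E u ∩ D').card := by
      rw [sum_rows (fun u => u ∈ DX) (fun w => w ∈ D'), univ_filter_mem]
      exact Finset.sum_congr rfl (fun u _ => by rw [filter_mem_inter])
    have h2 : (E.filter (fun p => p.1 ∈ DX ∧ p.2 ∈ D')).card
        = ∑ v ∈ D', (nbrT n E v ∩ DX).card := by
      have heq : E.filter (fun p => p.1 ∈ DX ∧ p.2 ∈ D')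
          = E.filter (fun p => p.2 ∈ D' ∧ p.1 ∈ DX) :=
        Finset.filter_congr (fun p _ => by tauto)
      rw [heq, sum_cols (fun v => v ∈ D') (fun u => u ∈ DX), univ_filter_mem]
      exact Finset.sum_congr rfl (fun v _ => by rw [filter_mem_inter])
    rw [← h1, h2]
  -- column-side bound
  have hD'sub : D' ⊆ Yf := by
    intro v hv
    simp only [hD', DstT, mem_filter, mem_univ, true_and] at hv
    simp [hYf, hv.1]
  have hC2'sub : C2' ⊆ D' := by
    intro v hv
    simp only [hC2', C2tT, mem_filter, mem_univ, true_and] at hv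
    exact hv.1
  have hC2sub : C2 ⊆ D := by
    intro u hu
    simp only [hC2, C2t, mem_filter, mem_univ, true_and] at hu
    exact hu.1
  -- column-side bound
  have hcolbound : (Yf.card - D'.card) * (s - 1) + (D'.card - C2'.card) * (s - 1)
      + C2'.card * C2.card
      ≤ (∑ v ∈ Yf, (nbrT n E v ∩ A).card) + ∑ v ∈ D', (nbrT n E v ∩ DX).card := by
    have hsplit : ∑ v ∈ Yf, (nbrT n E v ∩ A).card
        = ∑ v ∈ Yf \ D', (nbrT n E v ∩ A).card + ∑ v ∈ D', (nbrT n E v ∩ A).card :=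
      (Finset.sum_sdiff hD'sub).symm
    have hb1 : (Yf \ D').card * (s - 1) ≤ ∑ v ∈ Yf \ D', (nbrT n E v ∩ A).card := by
      rw [← smul_eq_mul]
      apply Finset.card_nsmul_le_sum
      intro v hv
      obtain ⟨hv1, hv2⟩ := Finset.mem_sdiff.1 hv
      simp only [hYf, mem_filter, mem_univ, true_and] at hv1
      by_contra hcon
      exact hv2 (by
        simp only [hD', DstT, mem_filter, mem_univ, true_and]
        exact ⟨hv1, by omega⟩)
    have hmerge : ∀ v, (nbrT n E v ∩ A).card + (nbrT n E v ∩ DX).card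
        = (nbrT n E v ∩ (A ∪ DX)).card := by
      intro v
      have hdisjv : Disjoint (nbrT n E v ∩ A) (nbrT n E v ∩ DX) := by
        rw [Finset.disjoint_left]
        intro x hx1 hx2
        have hxA := (Finset.mem_inter.1 hx1).2
        have hxDX := (Finset.mem_inter.1 hx2).2
        rcases Finset.mem_union.1 hxDX with h | h
        · simp only [hD, Dst, mem_filter, mem_univ, true_and] at h
          exact h.1 hxA
        · simp only [hXs, Xst, mem_filter, mem_univ, true_and] at h
          exact h.1 hxA
      conv_rhs => rw [Finset.inter_union_distrib_left]
      exact (Finset.card_union_of_disjoint hdisjv).symm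
    have hsplit2 : ∑ v ∈ D', (nbrT n E v ∩ (A ∪ DX)).card
        = ∑ v ∈ D' \ C2', (nbrT n E v ∩ (A ∪ DX)).card
          + ∑ v ∈ C2', (nbrT n E v ∩ (A ∪ DX)).card :=
      (Finset.sum_sdiff hC2'sub).symm
    have hb2 : (D' \ C2').card * (s - 1) ≤ ∑ v ∈ D' \ C2', (nbrT n E v ∩ (A ∪ DX)).card := by
      rw [← smul_eq_mul]
      apply Finset.card_nsmul_le_sum
      intro v hv
      obtain ⟨hv1, hv2⟩ := Finset.mem_sdiff.1 hv
      by_contra hcon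
      refine hv2 ?_
      simp only [hC2', C2tT, mem_filter, mem_univ, true_and]
      refine ⟨hv1, ?_⟩
      have : A ∪ Dst n E s A A' ∪ Xst n E s t A A' = A ∪ DX := by
        rw [hDX, ← hD, ← hXs, Finset.union_assoc]
      rw [this]
      omega
    have hb3 : C2'.card * C2.card ≤ ∑ v ∈ C2', (nbrT n E v ∩ (A ∪ DX)).card := by
      rw [← smul_eq_mul]
      apply Finset.card_nsmul_le_sum
      intro v hv
      have hsubC : C2 ⊆ nbrT n E v ∩ (A ∪ DX) := by
        intro u' hu'
        have hedge : (u', v) ∈ E := lemComp hst hsat (hC2 ▸ hu') (hC2' ▸ hv)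
        refine Finset.mem_inter.2 ⟨mem_nbrT.2 hedge, ?_⟩
        exact Finset.mem_union.2 (Or.inr (Finset.mem_union.2 (Or.inl (hC2sub hu'))))
      exact Finset.card_le_card hsubC
    have hcard1 : (Yf \ D').card = Yf.card - D'.card := Finset.card_sdiff_of_subset hD'sub
    have hcard2 : (D' \ C2').card = D'.card - C2'.card := Finset.card_sdiff_of_subset hC2'sub
    have hsum3 : ∑ v ∈ D', (nbrT n E v ∩ A).card + ∑ v ∈ D', (nbrT n E v ∩ DX).card
        = ∑ v ∈ D', (nbrT n E v ∩ (A ∪ DX)).card := by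
      rw [← Finset.sum_add_distrib]
      exact Finset.sum_congr rfl (fun v _ => hmerge v)
    calc (Yf.card - D'.card) * (s - 1) + (D'.card - C2'.card) * (s - 1) + C2'.card * C2.card
        ≤ (Yf.card - D'.card) * (s - 1)
          + (∑ v ∈ D' \ C2', (nbrT n E v ∩ (A ∪ DX)).card
            + ∑ v ∈ C2', (nbrT n E v ∩ (A ∪ DX)).card) := by
          rw [← hcard2]
          omega
      _ = (Yf.card - D'.card) * (s - 1) + ∑ v ∈ D', (nbrT n E v ∩ (A ∪ DX)).card := by
          rw [← hsplit2]
      _ ≤ ∑ v ∈ Yf \ D', (nbrT n E v ∩ A).card + ∑ v ∈ D', (nbrT n E v ∩ (A ∪ DX)).card := by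
          rw [← hcard1]
          omega
      _ = ∑ v ∈ Yf \ D', (nbrT n E v ∩ A).card + (∑ v ∈ D', (nbrT n E v ∩ A).card
            + ∑ v ∈ D', (nbrT n E v ∩ DX).card) := by rw [hsum3]
      _ = (∑ v ∈ Yf, (nbrT n E v ∩ A).card) + ∑ v ∈ D', (nbrT n E v ∩ DX).card := by
          rw [hsplit]
          ring
  -- final assembly
  set M := n - t + 1 with hM
  set k := s - 1 with hk
  set F := (s - 1) ^ 2 / 4 with hF
  rw [hXfcard] at hrowbound
  rw [hYfcard] at hcolbound
  have hyc : C2'.card ≤ D'.card := Finset.card_le_card hC2'sub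
  have hcc : D'.card ≤ M := hYfcard ▸ Finset.card_le_card hD'sub
  have hpay : C2'.card * k ≤ C2'.card * C2.card + F := payoff hy (amgm k C2.card)
  have hk1 : (M - D'.card) * k + (D'.card - C2'.card) * k = (M - C2'.card) * k := by
    rw [← add_mul]
    congr 1
    omega
  have hk2 : (M - C2'.card) * k + C2'.card * k = M * k := by
    rw [← add_mul]
    congr 1
    omega
  have hk3 : (t - 1) * M + M * k = (s + t - 2) * M := by
    rw [mul_comm M k, ← add_mul]
    congr 1
    omega
  omega



/-- Claim 2.3 of GKS / Claim 4.8: a `K_{s,t}`-saturated `n` by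
`n` bipartite graph with minimum degree at least `t-1` containing a core with
`e` edges has at least `(s+t-2)(n-t+1) - ⌊(s-1)²/4⌋ + e` edges. -/
theorem stmt12 (s t n : ℕ) (hs : 1 ≤ s) (hst : s < t) (hn : t ≤ n)
    (E : Finset (Fin n × Fin n)) (hsat : SaturatedKst n E s t)
    (hminU : ∀ u : Fin n, t - 1 ≤ degU n E u)
    (hminV : ∀ v : Fin n, t - 1 ≤ degV n E v)
    (A A' : Finset (Fin n)) (a₀ a₀' : Fin n)
    (hA : A.card = t - 1) (hA' : A'.card = t - 1)
    (ha₀ : a₀ ∈ A) (ha₀' : a₀' ∈ A')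
    (hNa₀ : ∀ v : Fin n, (a₀, v) ∈ E → v ∈ A')
    (hNa₀' : ∀ u : Fin n, (u, a₀') ∈ E → u ∈ A)
    (e : ℕ) (he : e = (E.filter (fun p => p.1 ∈ A ∧ p.2 ∈ A')).card) :
    (s + t - 2) * (n - t + 1) + e ≤ E.card + (s - 1) ^ 2 / 4 := by
  rcases le_total (C2tT n E s t A A').card (C2t n E s t A A').card with h | h
  · exact mainLedger s t n hs hst hn E hsat hminU hminV A A' a₀ a₀' hA hA' ha₀ ha₀'
      hNa₀ hNa₀' e he h
  · have hminU' : ∀ u : Fin n, t - 1 ≤ degU n (swapE n E) u := by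
      intro u
      rw [degU_eq, nbr_swapE, ← degV_eq]
      exact hminV u
    have hminV' : ∀ v : Fin n, t - 1 ≤ degV n (swapE n E) v := by
      intro v
      rw [degV_eq, nbrT_swapE, ← degU_eq]
      exact hminU v
    have hNs1 : ∀ v : Fin n, (a₀', v) ∈ swapE n E → v ∈ A := by
      intro v hv
      exact hNa₀' v (mem_swapE.1 hv)
    have hNs2 : ∀ u : Fin n, (u, a₀) ∈ swapE n E → u ∈ A' := by
      intro u hu
      exact hNa₀ u (mem_swapE.1 hu)
    have he' : e = ((swapE n E).filter (fun p => p.1 ∈ A' ∧ p.2 ∈ A)).card := by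
      rw [filter_swapE, ← he]
    have hy' : (C2tT n (swapE n E) s t A' A).card ≤ (C2t n (swapE n E) s t A' A).card := by
      rw [C2tT_swap, C2t_swap]
      exact h
    have := mainLedger s t n hs hst hn (swapE n E) (saturated_swap hsat) hminU' hminV'
      A' A a₀' a₀ hA' hA ha₀' ha₀ hNs1 hNs2 e he' hy'
    rwa [card_swapE] at this
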